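/- Let a < 0, c < 0, d > 0, and f(m) = a·m² + b·m + c·|m| + d·log(m²) for m ≠ 0. If b = 0 then f is even and m⁺ = (-c - √(c² - 16ad))/(4a) and -m⁺ are both global maximizers of f over ℝ \ {0}. -/
import Mathlib


/-- If a < 0, c < 0, d > 0 and b = 0, then f(m) = a m² + b m + c |m| + d log(m²)
is even, and m⁺ = (-c - √(c² - 16ad))/(4a) and -m⁺ are both global maximizers of f
over ℝ \ {0}. -/
theorem stmt8 (a c d : ℝ) (ha : a < 0) (hc : c < 0) (hd : 0 < d) :
    let b : ℝ := 0
    let f : ℝ → ℝ := fun m => a * m ^ 2 + b * m + c * |m| + d * Real.log (m ^ 2)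
    let mp : ℝ := (-c - Real.sqrt (c ^ 2 - 16 * a * d)) / (4 * a)
    (∀ m : ℝ, f (-m) = f m) ∧ mp ≠ 0 ∧
      (∀ m : ℝ, m ≠ 0 → f m ≤ f mp) ∧ (∀ m : ℝ, m ≠ 0 → f m ≤ f (-mp)) := by
  intro b f mp
  have heven : ∀ m : ℝ, f (-m) = f m := by
    intro m
    have h1 : (-m) ^ 2 = m ^ 2 := by ring
    simp only [f, h1, abs_neg]
    ring
  have hdisc : (0:ℝ) ≤ c ^ 2 - 16 * a * d := by nlinarith
  have hs : Real.sqrt (c ^ 2 - 16 * a * d) ^ 2 = c ^ 2 - 16 * a * d :=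
    Real.sq_sqrt hdisc
  have hsgt : -c < Real.sqrt (c ^ 2 - 16 * a * d) := by
    have h1 : Real.sqrt (c ^ 2) < Real.sqrt (c ^ 2 - 16 * a * d) :=
      Real.sqrt_lt_sqrt (by positivity) (by nlinarith)
    rwa [Real.sqrt_sq_eq_abs, abs_of_neg hc] at h1
  have h4a : (4:ℝ) * a < 0 := by linarith
  have hmp : 0 < mp :=
    div_pos_of_neg_of_neg (by linarith) h4a
  have ht : 4 * a * mp = -c - Real.sqrt (c ^ 2 - 16 * a * d) := by
    show 4 * a * ((-c - Real.sqrt (c ^ 2 - 16 * a * d)) / (4 * a)) = _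
    rw [mul_div_cancel₀ _ (ne_of_lt h4a)]
  clear_value mp
  have hcrit : 2 * a * mp ^ 2 + c * mp + 2 * d = 0 := by
    have h5 : (c + 4 * a * mp) ^ 2 = c ^ 2 - 16 * a * d := by
      have h6 : c + 4 * a * mp = -Real.sqrt (c ^ 2 - 16 * a * d) := by linarith
      rw [h6, neg_pow]; rw [hs]; ring
    have h7 : 8 * a * (2 * a * mp ^ 2 + c * mp + 2 * d) = 0 := by
      linear_combination h5
    have h8a : (8 : ℝ) * a ≠ 0 := by
      intro h; nlinarith
    exact (mul_eq_zero.mp h7).resolve_left h8a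
  have key : ∀ m : ℝ, 0 < m → f m ≤ f mp := by
    intro m hm
    simp only [f, b, abs_of_pos hm, abs_of_pos hmp]
    have hlog : mp * (Real.log (m ^ 2) - Real.log (mp ^ 2)) ≤ 2 * (m - mp) := by
      have h1 : Real.log (m / mp) ≤ m / mp - 1 :=
        Real.log_le_sub_one_of_pos (div_pos hm hmp)
      rw [Real.log_div hm.ne' hmp.ne'] at h1
      have h2 : Real.log (m ^ 2) = 2 * Real.log m := by
        rw [Real.log_pow]; push_cast; ring
      have h3 : Real.log (mp ^ 2) = 2 * Real.log mp := by
        rw [Real.log_pow]; push_cast; ring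
      rw [h2, h3]
      have h4 : mp * (Real.log m - Real.log mp) ≤ mp * (m / mp - 1) :=
        mul_le_mul_of_nonneg_left h1 hmp.le
      have h5 : mp * (m / mp - 1) = m - mp := by field_simp
      nlinarith [h4, h5]
    have hdl := mul_le_mul_of_nonneg_left hlog hd.le
    nlinarith [hdl, hcrit, mul_nonneg (mul_nonneg (neg_nonneg.mpr ha.le) hmp.le)
      (sq_nonneg (m - mp)), mul_pos hm hmp]
  refine ⟨heven, hmp.ne', ?_, ?_⟩
  · intro m hm
    rcases lt_or_gt_of_ne hm with h | h
    · rw [← heven m]; exact key (-m) (by linarith)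
    · exact key m h
  · intro m hm
    rw [heven mp]
    rcases lt_or_gt_of_ne hm with h | h
    · rw [← heven m]; exact key (-m) (by linarith)
    · exact key m h
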